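/- Let q = p^m with p ≥ 5 prime and let A : F_q → F_q be an Alltop function. For a, b ∈ F_q define v_{ab} ∈ ℂ^{F_q} by v_{ab}(x) = (1/√q)·χ(A(x+a) + b(x+a)), where χ(x) = e^{2πi·tr(x)/p} and tr : F_q → F_p is the absolute trace. Then for all a, b, c, d ∈ F_q with a ≠ c, the inner product satisfies |⟨v_{ab}, v_{cd}⟩| = 1/√q. -/

import Mathlib

open Finset

/-- The difference function `Δ_{f,a}(x) = f(x+a) - f(x)`. -/
def deltaFn {F : Type*} [Field F] (f : F → F) (a : F) : F → F := fun x => f (x + a) - f x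

/-- `f` is planar if `Δ_{f,a}` is a bijection for every `a ≠ 0`. -/
def IsPlanar {F : Type*} [Field F] (f : F → F) : Prop :=
  ∀ a : F, a ≠ 0 → Function.Bijective (deltaFn f a)

/-- `f` is an Alltop function if `Δ_{f,a}` is planar for every `a ≠ 0`. -/
def IsAlltop {F : Type*} [Field F] (f : F → F) : Prop :=
  ∀ a : F, a ≠ 0 → IsPlanar (deltaFn f a)

/-- The additive character `χ(x) = e^{2πi·tr(x)/p}` of `F_{p^m}`, where `tr` is the
absolute trace to `F_p = ZMod p`. -/
noncomputable def chi (p m : ℕ) [Fact p.Prime] (x : GaloisField p m) : ℂ :=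
  Complex.exp (2 * Real.pi * Complex.I *
    ((Algebra.trace (ZMod p) (GaloisField p m) x).val : ℂ) / (p : ℂ))

/-- The standard Hermitian inner product `⟨u, w⟩ = ∑ x, conj (u x) * w x` on `ℂ^F`. -/
noncomputable def herm {F : Type*} [Fintype F] (u w : F → ℂ) : ℂ :=
  ∑ x : F, (starRingEnd ℂ) (u x) * w x

/-- The Alltop-type vector `v_{ab}(x) = q^{-1/2} χ(A(x+a) + b(x+a))` in `ℂ^{F_q}`,
`q = p^m`. -/
noncomputable def alltopVec (p m : ℕ) [Fact p.Prime]
    (A : GaloisField p m → GaloisField p m) (a b : GaloisField p m) :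
    GaloisField p m → ℂ :=
  fun x => ((1 / Real.sqrt ((p : ℝ) ^ m) : ℝ) : ℂ) * chi p m (A (x + a) + b * (x + a))

open scoped Classical in
/-- The standard basis vector `e_y` of `ℂ^{F_q}`. -/
noncomputable def stdVec (p m : ℕ) [Fact p.Prime] (y : GaloisField p m) : GaloisField p m → ℂ :=
  fun x => if x = y then 1 else 0

/- ## Auxiliary lemmas -/

private noncomputable def Echi (p : ℕ) (n : ℤ) : ℂ :=
  Complex.exp (2 * Real.pi * Complex.I * (n : ℂ) / (p : ℂ))

private lemma Echi_add (p : ℕ) (a b : ℤ) : Echi p (a + b) = Echi p a * Echi p b := by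
  unfold Echi
  rw [← Complex.exp_add]
  congr 1
  push_cast
  ring

private lemma Echi_p_mul (p : ℕ) (hp : (p:ℂ) ≠ 0) (t : ℤ) : Echi p (p * t) = 1 := by
  unfold Echi
  have h : 2 * (Real.pi:ℂ) * Complex.I * (((p:ℤ) * t : ℤ) : ℂ) / (p : ℂ)
      = t * (2 * Real.pi * Complex.I) := by
    push_cast
    field_simp
  rw [h, Complex.exp_int_mul_two_pi_mul_I]

private lemma Echi_natMod (p : ℕ) (hp : (p:ℂ) ≠ 0) (n : ℕ) :
    Echi p ((n % p : ℕ) : ℤ) = Echi p (n : ℤ) := by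
  have h : (n : ℤ) = ((n % p : ℕ) : ℤ) + (p : ℤ) * ((n / p : ℕ) : ℤ) := by
    exact_mod_cast (Nat.mod_add_div n p).symm
  rw [h, Echi_add, Echi_p_mul p hp, mul_one]

private lemma conj_Echi (p : ℕ) (n : ℤ) : (starRingEnd ℂ) (Echi p n) = (Echi p n)⁻¹ := by
  unfold Echi
  rw [← Complex.exp_conj, ← Complex.exp_neg]
  congr 1
  simp [map_div₀, Complex.conj_I]
  ring_nf
  rw [Complex.conj_ofNat]
  ring

section ChiLemmas

variable (p m : ℕ) [Fact p.Prime]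

private lemma pC_ne : (p : ℂ) ≠ 0 :=
  Nat.cast_ne_zero.mpr (Fact.out : p.Prime).ne_zero

private lemma chi_eq_Echi (x : GaloisField p m) :
    chi p m x = Echi p ((Algebra.trace (ZMod p) (GaloisField p m) x).val : ℤ) := by
  simp [chi, Echi]

private lemma chi_ne_zero (x : GaloisField p m) : chi p m x ≠ 0 :=
  Complex.exp_ne_zero _

private lemma chi_add (x y : GaloisField p m) :
    chi p m (x + y) = chi p m x * chi p m y := by
  haveI : NeZero p := ⟨(Fact.out : p.Prime).ne_zero⟩
  rw [chi_eq_Echi, chi_eq_Echi, chi_eq_Echi, map_add, ← Echi_add, ZMod.val_add,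
    Echi_natMod p (pC_ne p)]
  norm_cast

private lemma chi_zero : chi p m 0 = 1 := by
  haveI : NeZero p := ⟨(Fact.out : p.Prime).ne_zero⟩
  rw [chi_eq_Echi, map_zero, ZMod.val_zero]
  unfold Echi
  norm_num

private lemma chi_neg (x : GaloisField p m) : chi p m (-x) = (chi p m x)⁻¹ := by
  have h : chi p m x * chi p m (-x) = 1 := by
    rw [← chi_add, add_neg_cancel, chi_zero]
  exact eq_inv_of_mul_eq_one_right h

private lemma conj_chi (x : GaloisField p m) :
    (starRingEnd ℂ) (chi p m x) = chi p m (-x) := by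
  rw [chi_eq_Echi, conj_Echi, ← chi_eq_Echi, chi_neg]

variable [Fintype (GaloisField p m)]

private lemma sum_chi (hp5 : 5 ≤ p) (hm : 0 < m) :
    ∑ x : GaloisField p m, chi p m x = 0 := by
  haveI : NeZero p := ⟨(Fact.out : p.Prime).ne_zero⟩
  -- there is x0 with trace 1
  obtain ⟨x0, hx0⟩ := Algebra.trace_surjective (ZMod p) (GaloisField p m) 1
  have hchi : chi p m x0 ≠ 1 := by
    rw [chi_eq_Echi, hx0, ZMod.val_one]
    intro h
    unfold Echi at h
    rw [Complex.exp_eq_one_iff] at h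
    obtain ⟨n, hn⟩ := h
    have h2 : (2 * Real.pi * Complex.I) ≠ 0 := by
      simp [Real.pi_ne_zero, Complex.I_ne_zero]
    have hfrac : (1 : ℂ) / (p : ℂ) = (n : ℂ) := by
      refine mul_right_cancel₀ h2 ?_
      rw [← hn]
      ring
    rw [div_eq_iff (pC_ne p)] at hfrac
    have hZ : (1 : ℤ) = n * (p : ℤ) := by exact_mod_cast hfrac
    have hdvd : (p : ℤ) ∣ 1 := Dvd.intro n (by linarith [hZ])
    have := Int.le_of_dvd one_pos hdvd
    omega
  set S := ∑ x : GaloisField p m, chi p m x with hS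
  have hshift : S * chi p m x0 = S := by
    rw [hS, Finset.sum_mul]
    simp_rw [← chi_add]
    exact Fintype.sum_equiv (Equiv.addRight x0) _ _ (fun x => rfl)
  have h0 : S * (chi p m x0 - 1) = 0 := by linear_combination hshift
  rcases mul_eq_zero.mp h0 with h | h
  · exact h
  · exact (hchi (sub_eq_zero.mp h)).elim

end ChiLemmas


theorem alltop_vectors_unbiased (p m : ℕ) [Fact p.Prime] [Fintype (GaloisField p m)]
    (hp : 5 ≤ p) (hm : 0 < m) (A : GaloisField p m → GaloisField p m) (hA : IsAlltop A) :
    ∀ a b c d : GaloisField p m, a ≠ c →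
      ‖herm (alltopVec p m A a b) (alltopVec p m A c d)‖ =
        1 / Real.sqrt ((p : ℝ) ^ m) := by
  classical
  intro a b c d hac
  haveI : NeZero p := ⟨(Fact.out : p.Prime).ne_zero⟩
  set D : GaloisField p m → GaloisField p m :=
    fun x => (A (x + c) + d * (x + c)) - (A (x + a) + b * (x + a)) with hD
  set S : ℂ := ∑ x : GaloisField p m, chi p m (D x) with hSdef
  -- Step 1: the inner product equals s² · S
  have h1 : herm (alltopVec p m A a b) (alltopVec p m A c d)
      = (((1 / Real.sqrt ((p : ℝ) ^ m) : ℝ) : ℂ)) ^ 2 * S := by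
    rw [hSdef, herm, Finset.mul_sum]
    refine Finset.sum_congr rfl fun x _ => ?_
    simp only [alltopVec, map_mul, Complex.conj_ofReal, conj_chi]
    have hDx : chi p m (D x)
        = chi p m (A (x + c) + d * (x + c)) * chi p m (-(A (x + a) + b * (x + a))) := by
      rw [← chi_add]
      congr 1
      rw [hD]
      ring
    rw [hDx]
    ring
  have hq : (Fintype.card (GaloisField p m)) = p ^ m := by
    rw [← Nat.card_eq_fintype_card]; exact GaloisField.card p m hm.ne'
  have hplanar : IsPlanar (deltaFn A (c - a)) := hA (c - a) (sub_ne_zero.mpr (Ne.symm hac))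
  -- Step 2: row sums
  have key : ∀ u : GaloisField p m,
      (∑ y : GaloisField p m, chi p m (D (y + u) - D y))
        = if u = 0 then ((p ^ m : ℕ) : ℂ) else 0 := by
    intro u
    by_cases hu : u = 0
    · subst hu
      simp only [add_zero, sub_self, chi_zero, if_true]
      rw [Finset.sum_const, Finset.card_univ, hq]
      simp
    · rw [if_neg hu]
      have hDdiff : ∀ y, D (y + u) - D y
          = deltaFn (deltaFn A (c - a)) u (y + a) + (d - b) * u := by
        intro y
        simp only [hD, deltaFn]
        ring_nf
      have hbij : Function.Bijective (fun y : GaloisField p m =>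
          deltaFn (deltaFn A (c - a)) u (y + a)) :=
        (hplanar u hu).comp (Equiv.addRight a).bijective
      calc (∑ y : GaloisField p m, chi p m (D (y + u) - D y))
          = ∑ y : GaloisField p m,
              chi p m (deltaFn (deltaFn A (c - a)) u (y + a)) * chi p m ((d - b) * u) := by
            refine Finset.sum_congr rfl fun y _ => ?_
            rw [hDdiff y, chi_add]
        _ = (∑ y : GaloisField p m, chi p m (deltaFn (deltaFn A (c - a)) u (y + a)))
              * chi p m ((d - b) * u) := by
            rw [← Finset.sum_mul]
        _ = 0 := by
            rw [Fintype.sum_bijective _ hbij _ (chi p m) (fun _ => rfl),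
              sum_chi p m hp hm, zero_mul]
  -- Step 3: |S|² = q
  have hSS : S * (starRingEnd ℂ) S = ((p ^ m : ℕ) : ℂ) := by
    rw [hSdef, map_sum]
    simp_rw [conj_chi]
    rw [Finset.sum_mul_sum]
    have hterm : ∀ x y : GaloisField p m,
        chi p m (D x) * chi p m (-(D y)) = chi p m (D x - D y) := by
      intro x y
      rw [sub_eq_add_neg, chi_add]
    simp_rw [hterm]
    rw [Finset.sum_comm]
    have hrow : ∀ y : GaloisField p m, (∑ x : GaloisField p m, chi p m (D x - D y))
        = ∑ u : GaloisField p m, chi p m (D (y + u) - D y) := fun y =>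
      (Fintype.sum_equiv (Equiv.addLeft y) _ _ (fun u => rfl)).symm
    simp_rw [hrow]
    rw [Finset.sum_comm]
    simp_rw [key]
    simp
  have hq0 : (0 : ℝ) < (p : ℝ) ^ m := pow_pos (by exact_mod_cast (Fact.out : p.Prime).pos) m
  have hnormSq : Complex.normSq S = (p : ℝ) ^ m := by
    have h2 : ((Complex.normSq S : ℝ) : ℂ) = ((p ^ m : ℕ) : ℂ) := by
      rw [← Complex.mul_conj, hSS]
    have h3 : Complex.normSq S = ((p ^ m : ℕ) : ℝ) := by exact_mod_cast h2
    rw [h3]; push_cast; ring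
  have habsS : ‖S‖ = Real.sqrt ((p : ℝ) ^ m) := by
    rw [Complex.norm_def, hnormSq]
  have hs0 : (0 : ℝ) < Real.sqrt ((p : ℝ) ^ m) := Real.sqrt_pos.mpr hq0
  rw [h1, norm_mul, norm_pow, Complex.norm_real, Real.norm_eq_abs, habsS,
    abs_of_nonneg (by positivity : (0 : ℝ) ≤ 1 / Real.sqrt ((p : ℝ) ^ m)),
    div_pow, one_pow, Real.sq_sqrt hq0.le]
  rw [eq_div_iff hs0.ne']
  field_simp
  exact Real.sq_sqrt hq0.le
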